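/- For any $C \ge 1$ there exists a ReLU network with width $2$, at most $2\lceil \log_2 C\rceil - 1$ hidden layers, all weights and shifts bounded in absolute value by $1$, that computes the function $x \mapsto Cx$ exactly on $[0,1]$ (equivalently, multiplication by the constant $C$ can be realized with $O(\log C)$ layers and $O(\log C)$ parameters under the unit-bounded-weight constraint). -/

import Mathlib

/-- A feedforward ReLU network with `L` hidden layers, width function `p`
(`p 0` = input dimension, widths `p 1, …, p L` for the hidden layers and output
dimension `1`), weight matrices `W ℓ` mapping layer `ℓ` to layer `ℓ+1`
(`W L` being the final linear output layer, which has no shift and no ReLU),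
and shift vectors `v ℓ` applied before each ReLU. Indices outside the declared
widths are ignored by the evaluation. -/
structure ReluNetwork where
  L : ℕ
  p : ℕ → ℕ
  W : ℕ → ℕ → ℕ → ℝ
  v : ℕ → ℕ → ℝ

namespace ReluNetwork

/-- The vector of values computed at layer `ℓ` (after the ReLU), on input `x`. -/
noncomputable def hidden (N : ReluNetwork) : ℕ → (ℕ → ℝ) → ℕ → ℝ
  | 0, x => fun i => if i < N.p 0 then x i else 0
  | ℓ + 1, x => fun i =>
      if i < N.p (ℓ + 1) then
        max ((∑ j ∈ Finset.range (N.p ℓ), N.W ℓ i j * N.hidden ℓ x j) - N.v ℓ i) 0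
      else 0

/-- The real-valued output of the network: the last layer is linear. -/
noncomputable def eval (N : ReluNetwork) (x : ℕ → ℝ) : ℝ :=
  ∑ j ∈ Finset.range (N.p N.L), N.W N.L 0 j * N.hidden N.L x j

/-- All network parameters are bounded in absolute value by one. -/
def bounded (N : ReluNetwork) : Prop :=
  (∀ ℓ i j, |N.W ℓ i j| ≤ 1) ∧ ∀ ℓ i, |N.v ℓ i| ≤ 1

end ReluNetwork

/-- Multiplication by a constant `C ≥ 1` can be realized exactly on `[0,1]` by a
ReLU network of width `2` with at most `2⌈log₂ C⌉ - 1` hidden layers and all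
parameters bounded in absolute value by one. -/
theorem const_mult_relu_network (C : ℝ) (hC : 1 ≤ C) :
    ∃ N : ReluNetwork, N.p 0 = 1 ∧ N.bounded ∧
      N.L ≤ 2 * ⌈Real.logb 2 C⌉₊ - 1 ∧
      (∀ ℓ, 1 ≤ ℓ → ℓ ≤ N.L → N.p ℓ ≤ 2) ∧
      ∀ x ∈ Set.Icc (0:ℝ) 1, N.eval (fun _ => x) = C * x := by
  set n := ⌈Real.logb 2 C⌉₊ with hn
  have hCpos : (0:ℝ) < C := lt_of_lt_of_le one_pos hC
  have hC2n : C ≤ 2 ^ n := by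
    have h1 : Real.logb 2 C ≤ (n : ℝ) := Nat.le_ceil _
    have h2 : (2:ℝ) ^ Real.logb 2 C ≤ (2:ℝ) ^ (n:ℝ) :=
      Real.rpow_le_rpow_of_exponent_le one_le_two h1
    rwa [Real.rpow_logb two_pos (by norm_num) hCpos, Real.rpow_natCast] at h2
  have h2npos : (0:ℝ) < 2 ^ n := by positivity
  set w : ℝ := C / 2 ^ n with hw
  refine ⟨⟨n, fun ℓ => if ℓ = 0 then 1 else 2,
      fun ℓ _ _ => if ℓ = n then w else 1, fun _ _ => 0⟩, rfl, ?_, ?_, ?_, ?_⟩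
  · constructor
    · intro ℓ i j
      dsimp only
      split
      · rw [abs_of_nonneg (by positivity)]
        exact div_le_one_of_le₀ hC2n (le_of_lt h2npos)
      · simp
    · intro ℓ i; simp
  · dsimp only; omega
  · intro ℓ h1 h2; simp [Nat.one_le_iff_ne_zero.mp h1]
  · intro x hx
    obtain ⟨hx0, hx1⟩ := hx
    set N : ReluNetwork := ⟨n, fun ℓ => if ℓ = 0 then 1 else 2,
      fun ℓ _ _ => if ℓ = n then w else 1, fun _ _ => 0⟩ with hN
    have hp : ∀ ℓ, N.p ℓ = if ℓ = 0 then 1 else 2 := fun _ => rfl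
    have hW : ∀ ℓ i j, N.W ℓ i j = if ℓ = n then w else 1 := fun _ _ _ => rfl
    have hv : ∀ ℓ i, N.v ℓ i = 0 := fun _ _ => rfl
    have hL : N.L = n := rfl
    have key : ∀ ℓ, 1 ≤ ℓ → ℓ ≤ n → ∀ i,
        N.hidden ℓ (fun _ => x) i = if i < 2 then 2 ^ (ℓ - 1) * x else 0 := by
      intro ℓ
      induction ℓ with
      | zero => omega
      | succ ℓ ih =>
        intro _ hle i
        rcases Nat.eq_zero_or_pos ℓ with h0 | hpos
        · subst h0
          have h0n : (0:ℕ) ≠ n := by omega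
          simp only [ReluNetwork.hidden]
          by_cases hi : i < 2
          · simp [hi, h0n, max_eq_left hx0, hp, hW, hv]
          · simp [hi, hp]
        · have hℓn : ℓ ≠ n := by omega
          have hℓ0 : ℓ ≠ 0 := by omega
          have ihs := ih hpos (by omega)
          have hsum : (∑ j ∈ Finset.range 2,
              (if ℓ = n then w else 1) * N.hidden ℓ (fun _ => x) j)
              = 2 ^ ℓ * x := by
            have hc : ∀ j ∈ Finset.range 2,
                (if ℓ = n then w else 1) * N.hidden ℓ (fun _ => x) j
                = 2 ^ (ℓ - 1) * x := by
              intro j hj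
              rw [ihs j, if_pos (Finset.mem_range.mp hj), if_neg hℓn, one_mul]
            rw [Finset.sum_congr rfl hc, Finset.sum_const, Finset.card_range]
            have he : ℓ = ℓ - 1 + 1 := by omega
            rw [show (2:ℝ) ^ ℓ = 2 ^ (ℓ - 1) * 2 by
              conv_lhs => rw [he]
              rw [pow_succ]]
            push_cast; ring
          simp only [ReluNetwork.hidden, hp, hW, hv, if_neg (Nat.succ_ne_zero ℓ),
            if_neg hℓ0]
          by_cases hi : i < 2
          · rw [if_pos hi, if_pos hi, sub_zero, hsum,
              max_eq_left (by positivity), Nat.add_sub_cancel]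
          · rw [if_neg hi, if_neg hi]
    rcases Nat.eq_zero_or_pos n with hn0 | hnpos
    · have hC1 : C = 1 := by
        have hlog0 : Real.logb 2 C ≤ 0 := by
          by_contra h
          have := Nat.ceil_pos.mpr (lt_of_not_ge h)
          omega
        have h2 : (2:ℝ) ^ Real.logb 2 C ≤ (2:ℝ) ^ (0:ℝ) :=
          Real.rpow_le_rpow_of_exponent_le one_le_two hlog0
        rw [Real.rpow_logb two_pos (by norm_num) hCpos, Real.rpow_zero] at h2
        linarith
      simp only [ReluNetwork.eval]
      norm_num [ReluNetwork.hidden, hn0, hC1, hw, hp, hW, hv, hL]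
    · have hn0' : n ≠ 0 := by omega
      simp only [ReluNetwork.eval]
      norm_num [hn0', hp, hW, hL]
      have hsum : ∀ j ∈ Finset.range 2, w * N.hidden n (fun _ => x) j
          = w * (2 ^ (n - 1) * x) := by
        intro j hj
        rw [key n hnpos le_rfl j, if_pos (Finset.mem_range.mp hj)]
      rw [Finset.sum_congr rfl hsum, Finset.sum_const, Finset.card_range]
      have h2 : (2:ℝ) ^ n = 2 * 2 ^ (n - 1) := by
        conv_lhs => rw [show n = n - 1 + 1 by omega]
        rw [pow_succ]; ring
      have hfin : (2:ℕ) • (w * (2 ^ (n - 1) * x)) = w * 2 ^ n * x := by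
        rw [h2]; push_cast; ring
      rw [hfin, hw, div_mul_cancel₀ _ (ne_of_gt h2npos)]
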